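/- For the weighted half-line R_l (l≥2) with ball V_l(r)={0,1,...,r}, the first Dirichlet eigenvalue is λ₁(V_l(r)) = 1 - (2√(l-1)/l)·cos θ_{l,r}, where θ_{l,r} is the smallest positive solution of sin((r+1)θ)cos θ / sin(rθ) = l/(2(l-1)), with first eigenfunction f₁(x) = (l-1)^{-x/2} sin((r+1-x)θ_{l,r}), which is positive and strictly decreasing in x on {0,...,r}. -/

import Mathlib

open Finset

variable {V : Type*}

noncomputable def deg (μ : V → V → ℝ) (x : V) : ℝ := ∑ᶠ y, μ x y

noncomputable def eSum (μ : V → V → ℝ) (A B : Finset V) : ℝ :=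
  ∑ x ∈ A, ∑ y ∈ B, μ x y

noncomputable def vol (μ : V → V → ℝ) (U : Finset V) : ℝ := ∑ x ∈ U, deg μ x

noncomputable def bdry (μ : V → V → ℝ) (U : Finset V) : ℝ := vol μ U - eSum μ U U

noncomputable def cheeger (μ : V → V → ℝ) (Ω : Finset V) : ℝ :=
  sInf {r : ℝ | ∃ U : Finset V, U.Nonempty ∧ U ⊆ Ω ∧ r = bdry μ U / vol μ U}

noncomputable def dualCheeger (μ : V → V → ℝ) (Ω : Finset V) : ℝ :=
  sSup {r : ℝ | ∃ V₁ V₂ : Finset V, V₁.Nonempty ∧ V₂.Nonempty ∧ Disjoint V₁ V₂ ∧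
    V₁ ⊆ Ω ∧ V₂ ⊆ Ω ∧ r = 2 * eSum μ V₁ V₂ / (vol μ V₁ + vol μ V₂)}

noncomputable def dLap (μ : V → V → ℝ) (Ω : Finset V) (f : V → ℝ) (x : V) : ℝ :=
  f x - (1 / deg μ x) * ∑ y ∈ Ω, μ x y * f y

def IsDirEigfun (μ : V → V → ℝ) (Ω : Finset V) (lam : ℝ) (f : V → ℝ) : Prop :=
  (∃ x ∈ Ω, f x ≠ 0) ∧ (∀ x ∉ Ω, f x = 0) ∧ ∀ x ∈ Ω, dLap μ Ω f x = lam * f x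

def IsDirEig (μ : V → V → ℝ) (Ω : Finset V) (lam : ℝ) : Prop :=
  ∃ f : V → ℝ, IsDirEigfun μ Ω lam f

noncomputable def lam1 (μ : V → V → ℝ) (Ω : Finset V) : ℝ :=
  sInf {l : ℝ | IsDirEig μ Ω l}

noncomputable def lamMax (μ : V → V → ℝ) (Ω : Finset V) : ℝ :=
  sSup {l : ℝ | IsDirEig μ Ω l}

def ConnectedOn (μ : V → V → ℝ) (Ω : Finset V) : Prop :=
  ∀ x ∈ Ω, ∀ y ∈ Ω,
    Relation.ReflTransGen (fun a b => a ∈ Ω ∧ b ∈ Ω ∧ μ a b ≠ 0) x y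

def BipartiteOn (μ : V → V → ℝ) (Ω : Finset V) : Prop :=
  ∃ U₁ U₂ : Finset V, Disjoint U₁ U₂ ∧ (U₁ : Set V) ∪ ↑U₂ = ↑Ω ∧
    (∀ x ∈ U₁, ∀ y ∈ U₁, μ x y = 0) ∧ (∀ x ∈ U₂, ∀ y ∈ U₂, μ x y = 0)

noncomputable def rlW (l : ℝ) (i j : ℕ) : ℝ :=
  if j = i + 1 then (l - 1) ^ i else if i = j + 1 then (l - 1) ^ j else 0

section Aux

lemma rlW_symm (l : ℝ) (i j : ℕ) : rlW l i j = rlW l j i := by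
  unfold rlW; split_ifs <;> first | rfl | omega

lemma rlW_nonneg {l : ℝ} (hl : 1 ≤ l) (i j : ℕ) : 0 ≤ rlW l i j := by
  have h : (0:ℝ) ≤ l - 1 := by linarith
  unfold rlW; split_ifs
  · exact pow_nonneg h _
  · exact pow_nonneg h _
  · exact le_refl 0

lemma rlW_eq_zero {l : ℝ} {i j : ℕ} (h1 : j ≠ i + 1) (h2 : i ≠ j + 1) : rlW l i j = 0 := by
  unfold rlW; split_ifs <;> first | rfl | omega

lemma deg_rlW_zero (l : ℝ) : deg (rlW l) 0 = 1 := by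
  unfold deg
  rw [finsum_eq_sum_of_support_subset _ (s := {1})]
  · simp [rlW]
  · intro y hy
    simp only [Function.mem_support] at hy
    simp only [Finset.coe_singleton, Set.mem_singleton_iff]
    by_contra h
    exact hy (rlW_eq_zero h (by omega))

lemma deg_rlW_succ (l : ℝ) (x : ℕ) : deg (rlW l) (x+1) = (l-1)^x * l := by
  unfold deg
  rw [finsum_eq_sum_of_support_subset _ (s := {x, x+2})]
  · rw [Finset.sum_pair (by omega)]
    have h1 : rlW l (x+1) x = (l-1)^x := by unfold rlW; split_ifs <;> first | rfl | omega
    have h2 : rlW l (x+1) (x+2) = (l-1)^(x+1) := by unfold rlW; split_ifs <;> first | rfl | omega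
    rw [h1, h2]; ring
  · intro y hy
    simp only [Function.mem_support] at hy
    simp only [Finset.coe_insert, Finset.coe_singleton, Set.mem_insert_iff, Set.mem_singleton_iff]
    by_contra h
    push_neg at h
    exact hy (rlW_eq_zero (by omega) (by omega))

lemma sum_rlW_zero (l : ℝ) (f : ℕ → ℝ) (n : ℕ) (hn : 2 ≤ n) :
    ∑ y ∈ range n, rlW l 0 y * f y = f 1 := by
  rw [← Finset.sum_subset (s₁ := {1}) (by simp; omega)
    (fun y _ hy => by rw [rlW_eq_zero (by simpa using hy) (by omega), zero_mul])]
  simp [rlW]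

lemma sum_rlW_mid (l : ℝ) (f : ℕ → ℝ) (n x : ℕ) (hx : 1 ≤ x) (hxn : x + 2 ≤ n) :
    ∑ y ∈ range n, rlW l x y * f y = (l-1)^(x-1) * f (x-1) + (l-1)^x * f (x+1) := by
  rw [← Finset.sum_subset (s₁ := {x-1, x+1}) (by intro y hy; simp at hy ⊢; omega)
    (fun y _ hy => by
      simp only [Finset.mem_insert, Finset.mem_singleton] at hy
      push_neg at hy
      rw [rlW_eq_zero (by omega) (by omega), zero_mul])]
  rw [Finset.sum_pair (by omega)]
  have h1 : rlW l x (x-1) = (l-1)^(x-1) := by unfold rlW; split_ifs <;> first | rfl | omega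
  have h2 : rlW l x (x+1) = (l-1)^x := by unfold rlW; split_ifs <;> first | rfl | omega
  rw [h1, h2]

lemma sum_rlW_top (l : ℝ) (f : ℕ → ℝ) (x : ℕ) (hx : 1 ≤ x) :
    ∑ y ∈ range (x+1), rlW l x y * f y = (l-1)^(x-1) * f (x-1) := by
  rw [← Finset.sum_subset (s₁ := {x-1}) (by simp)
    (fun y hy hy' => by
      simp only [Finset.mem_singleton] at hy'
      simp only [Finset.mem_range] at hy
      rw [rlW_eq_zero (by omega) (by omega), zero_mul])]
  rw [Finset.sum_singleton]
  have h1 : rlW l x (x-1) = (l-1)^(x-1) := by unfold rlW; split_ifs <;> first | rfl | omega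
  rw [h1]

lemma theta_bound (l : ℝ) (hl : 2 ≤ l) (r : ℕ) (hr : 1 ≤ r) (θ : ℝ)
    (hθmin : ∀ θ' : ℝ, 0 < θ' →
      Real.sin (((r : ℝ) + 1) * θ') * Real.cos θ' / Real.sin ((r : ℝ) * θ')
        = l / (2 * (l - 1)) → θ ≤ θ') :
    θ < Real.pi / ((r : ℝ) + 1) := by
  set c : ℝ := l / (2 * (l - 1)) with hc
  have hl1 : (0:ℝ) < l - 1 := by linarith
  have hcpos : 0 < c := by positivity
  have hc1 : c ≤ 1 := by rw [hc, div_le_one (by positivity)]; linarith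
  have hrR : (1:ℝ) ≤ (r:ℝ) := by exact_mod_cast hr
  have hb'pos : 0 < Real.pi / ((r:ℝ)+1) := by positivity
  set φ : ℝ → ℝ := fun t => Real.sin (((r:ℝ)+1)*t) * Real.cos t - c * Real.sin ((r:ℝ)*t)
    with hφ
  have hd1 : HasDerivAt (fun t : ℝ => Real.sin (((r:ℝ)+1)*t)) ((r:ℝ)+1) 0 := by
    have h := (Real.hasDerivAt_sin (((r:ℝ)+1)*0)).comp 0
      ((hasDerivAt_id (0:ℝ)).const_mul ((r:ℝ)+1))
    simp [Function.comp] at h; exact h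
  have hd3 : HasDerivAt (fun t : ℝ => Real.sin ((r:ℝ)*t)) ((r:ℝ)) 0 := by
    have h := (Real.hasDerivAt_sin (((r:ℝ))*0)).comp 0
      ((hasDerivAt_id (0:ℝ)).const_mul ((r:ℝ)))
    simp [Function.comp] at h; exact h
  have hD : HasDerivAt φ (((r:ℝ)+1) - c*(r:ℝ)) 0 := by
    have h := (hd1.mul (Real.hasDerivAt_cos 0)).sub (hd3.const_mul c)
    simp at h; exact h
  have hder_pos : (0:ℝ) < ((r:ℝ)+1) - c*(r:ℝ) := by nlinarith
  rw [hasDerivAt_iff_tendsto_slope] at hD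
  have hev : ∀ᶠ t in nhdsWithin (0:ℝ) (Set.Ioi 0), 0 < slope φ 0 t := by
    have h := hD.eventually (eventually_gt_nhds hder_pos)
    exact (nhdsWithin_mono (0:ℝ) (fun x hx => ne_of_gt hx)) h
  have hev2 : ∀ᶠ t in nhdsWithin (0:ℝ) (Set.Ioi 0), t < Real.pi/((r:ℝ)+1) :=
    (eventually_lt_nhds hb'pos).filter_mono nhdsWithin_le_nhds
  have hev3 : ∀ᶠ t in nhdsWithin (0:ℝ) (Set.Ioi 0), 0 < t :=
    Filter.eventually_of_mem self_mem_nhdsWithin (fun x hx => hx)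
  obtain ⟨t₀, hslope, ht₀lt, ht₀pos⟩ := (hev.and (hev2.and hev3)).exists
  have hφ0 : φ 0 = 0 := by simp [hφ]
  have hφt₀ : 0 < φ t₀ := by
    have h := mul_pos hslope (sub_pos.mpr ht₀pos)
    rw [slope_def_field] at h
    rw [div_mul_cancel₀ _ (by simp [ne_of_gt ht₀pos] : t₀ - 0 ≠ 0)] at h
    simpa [hφ0] using h
  have hcont : ContinuousOn φ (Set.Icc t₀ (Real.pi/((r:ℝ)+1))) := by
    apply Continuous.continuousOn; fun_prop
  have hmulpi : ((r:ℝ)+1) * (Real.pi/((r:ℝ)+1)) = Real.pi :=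
    mul_div_cancel₀ _ (by positivity)
  have hφb' : φ (Real.pi/((r:ℝ)+1)) < 0 := by
    have h1 : Real.sin (((r:ℝ)+1) * (Real.pi/((r:ℝ)+1))) = 0 := by
      rw [hmulpi]; exact Real.sin_pi
    have h2 : 0 < Real.sin ((r:ℝ) * (Real.pi/((r:ℝ)+1))) := by
      apply Real.sin_pos_of_pos_of_lt_pi
      · positivity
      · rw [mul_div_assoc', div_lt_iff₀ (by positivity : (0:ℝ) < (r:ℝ)+1)]
        nlinarith [Real.pi_pos]
    simp only [hφ, h1, zero_mul, zero_sub, neg_neg]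
    nlinarith
  have hsub := intermediate_value_Icc' (le_of_lt (ht₀lt)) hcont
  have h0mem : (0:ℝ) ∈ Set.Icc (φ (Real.pi/((r:ℝ)+1))) (φ t₀) :=
    ⟨le_of_lt hφb', le_of_lt hφt₀⟩
  obtain ⟨θ', hθ'mem, hθ'eq0⟩ := hsub h0mem
  have hθ'pos : 0 < θ' := lt_of_lt_of_le ht₀pos hθ'mem.1
  have hθ'lt : θ' < Real.pi/((r:ℝ)+1) := by
    rcases lt_or_eq_of_le hθ'mem.2 with h | h
    · exact h
    · exfalso; rw [h] at hθ'eq0; linarith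
  have hsr' : 0 < Real.sin ((r:ℝ) * θ') := by
    apply Real.sin_pos_of_pos_of_lt_pi
    · positivity
    · have h3 : (r:ℝ) * θ' < (r:ℝ) * (Real.pi/((r:ℝ)+1)) :=
        mul_lt_mul_of_pos_left hθ'lt (by positivity)
      refine lt_trans h3 ?_
      rw [mul_div_assoc', div_lt_iff₀ (by positivity : (0:ℝ) < (r:ℝ)+1)]
      nlinarith [Real.pi_pos]
  have hratio : Real.sin (((r:ℝ)+1)*θ') * Real.cos θ' / Real.sin ((r:ℝ)*θ') = c := by
    have h4 : Real.sin (((r:ℝ)+1)*θ') * Real.cos θ' = c * Real.sin ((r:ℝ)*θ') := by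
      have := hθ'eq0; simp only [hφ] at this; linarith
    rw [h4, mul_div_assoc, div_self (ne_of_gt hsr'), mul_one]
  exact lt_of_le_of_lt (hθmin θ' hθ'pos hratio) hθ'lt

end Aux

set_option maxHeartbeats 1000000

theorem stmt19 (l : ℝ) (hl : 2 ≤ l) (r : ℕ) (hr : 1 ≤ r) (θ : ℝ) (hθpos : 0 < θ)
    (hθeq : Real.sin (((r : ℝ) + 1) * θ) * Real.cos θ / Real.sin ((r : ℝ) * θ)
      = l / (2 * (l - 1)))
    (hθmin : ∀ θ' : ℝ, 0 < θ' →
      Real.sin (((r : ℝ) + 1) * θ') * Real.cos θ' / Real.sin ((r : ℝ) * θ')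
        = l / (2 * (l - 1)) → θ ≤ θ')
    (f₁ : ℕ → ℝ)
    (hf₁ : ∀ x : ℕ, f₁ x = if x ≤ r then
      (l - 1) ^ (-(x : ℝ) / 2) * Real.sin (((r : ℝ) + 1 - (x : ℝ)) * θ) else 0) :
    lam1 (rlW l) (Finset.range (r + 1)) = 1 - (2 * Real.sqrt (l - 1) / l) * Real.cos θ ∧
    IsDirEigfun (rlW l) (Finset.range (r + 1))
      (1 - (2 * Real.sqrt (l - 1) / l) * Real.cos θ) f₁ ∧
    (∀ x : ℕ, x ≤ r → 0 < f₁ x) ∧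
    (∀ x : ℕ, x < r → f₁ (x + 1) < f₁ x) := by
  classical
  have hl1 : (0:ℝ) < l - 1 := by linarith
  have hl0 : (0:ℝ) < l := by linarith
  set b : ℝ := Real.sqrt (l-1) with hbdef
  have hbpos : 0 < b := Real.sqrt_pos.mpr hl1
  have hb2 : b^2 = l - 1 := Real.sq_sqrt hl1.le
  set lam : ℝ := 1 - 2 * b / l * Real.cos θ with hlamdef
  set Ω : Finset ℕ := Finset.range (r+1) with hΩdef
  have hrR : (1:ℝ) ≤ (r:ℝ) := by exact_mod_cast hr
  have hθub : θ < Real.pi / ((r:ℝ)+1) := theta_bound l hl r hr θ hθmin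
  have hrp1θ : ((r:ℝ)+1) * θ < Real.pi := by
    rw [lt_div_iff₀ (by positivity : (0:ℝ) < (r:ℝ)+1)] at hθub
    nlinarith
  have hθpi : θ < Real.pi := by nlinarith
  have hsinθ : 0 < Real.sin θ := Real.sin_pos_of_pos_of_lt_pi hθpos hθpi
  set S : ℕ → ℝ := fun k => Real.sin ((k:ℝ) * θ) with hSdef
  have hSpos : ∀ k : ℕ, 1 ≤ k → k ≤ r + 1 → 0 < S k := by
    intro k hk1 hk2
    apply Real.sin_pos_of_pos_of_lt_pi
    · have h1 : (1:ℝ) ≤ (k:ℝ) := by exact_mod_cast hk1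
      nlinarith
    · have hk2' : (k:ℝ) ≤ (r:ℝ)+1 := by exact_mod_cast hk2
      nlinarith
  have hS0 : S 0 = 0 := by simp [hSdef]
  have hsr_pos : 0 < Real.sin ((r:ℝ)*θ) := hSpos r hr (by omega)
  have heq : Real.sin (((r:ℝ)+1)*θ) * Real.cos θ * (2*(l-1)) = l * Real.sin ((r:ℝ)*θ) := by
    rw [div_eq_div_iff (ne_of_gt hsr_pos) (by positivity : (2*(l-1)) ≠ 0)] at hθeq
    exact hθeq
  have htrig : ∀ A : ℝ, Real.sin (A + θ) + Real.sin (A - θ) = 2 * Real.sin A * Real.cos θ := by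
    intro A; rw [Real.sin_add, Real.sin_sub]; ring
  have hS3 : ∀ k : ℕ, S (k+2) + S k = 2 * S (k+1) * Real.cos θ := by
    intro k
    simp only [hSdef]
    have e1 : ((k+2:ℕ):ℝ)*θ = ((k+1:ℕ):ℝ)*θ + θ := by push_cast; ring
    have e2 : ((k:ℕ):ℝ)*θ = ((k+1:ℕ):ℝ)*θ - θ := by push_cast; ring
    rw [e1, e2]
    exact htrig _
  have hkey : ∀ k : ℕ, S (k+1) * S (k+1) - S k * S (k+2) = Real.sin θ ^ 2 := by
    intro k
    simp only [hSdef]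
    have e1 : ((k+1:ℕ):ℝ)*θ = (k:ℝ)*θ + θ := by push_cast; ring
    have e2 : ((k+2:ℕ):ℝ)*θ = ((k:ℝ)*θ + θ) + θ := by push_cast; ring
    rw [e1, e2]
    simp only [Real.sin_add, Real.cos_add]
    linear_combination (Real.sin θ)^2 * Real.sin_sq_add_cos_sq ((k:ℝ)*θ)
  have hs2 : S (r+2) * (l-1) = S r := by
    have h1 : S (r+2) + S r = 2 * Real.sin (((r:ℝ)+1)*θ) * Real.cos θ := by
      simp only [hSdef]
      have e1 : ((r+2:ℕ):ℝ)*θ = ((r:ℝ)+1)*θ + θ := by push_cast; ring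
      have e2 : ((r:ℕ):ℝ)*θ = ((r:ℝ)+1)*θ - θ := by push_cast; ring
      rw [e1, e2]
      exact htrig _
    have h2 : S r = Real.sin ((r:ℝ)*θ) := rfl
    linear_combination (l-1) * h1 + heq
  have hmono : ∀ m : ℕ, ∀ k : ℕ, 1 ≤ k → k + m = r → S k < b * S (k+1) := by
    intro m
    induction m with
    | zero =>
      intro k hk1 hkr
      have hkr' : k = r := by omega
      subst hkr'
      have hp1 : 0 < S k := hSpos k hk1 (by omega)
      have hp2 : 0 < S (k+1) := hSpos (k+1) (by omega) (by omega)
      have h1 : (b * S (k+1))^2 = S k^2 + (l-1) * Real.sin θ^2 := by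
        linear_combination (S (k+1)^2) * hb2 + (l-1) * hkey k + S k * hs2
      have h2 : S k^2 < (b * S (k+1))^2 := by
        rw [h1]; nlinarith [mul_pos hsinθ hsinθ]
      exact lt_of_pow_lt_pow_left₀ 2 (by positivity) h2
    | succ n ih =>
      intro k hk1 hkr
      have h2 := ih (k+1) (by omega) (by omega)
      have hp1 : 0 < S k := hSpos k hk1 (by omega)
      have hp2 : 0 < S (k+1) := hSpos (k+1) (by omega) (by omega)
      have h3 : S k * S (k+2) < S (k+1) * S (k+1) := by
        have := hkey k; nlinarith [mul_pos hsinθ hsinθ]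
      have h6 : S k * S (k+1) < (b * S (k+1)) * S (k+1) := by
        calc S k * S (k+1) < S k * (b * S (k+2)) := mul_lt_mul_of_pos_left h2 hp1
          _ = b * (S k * S (k+2)) := by ring
          _ < b * (S (k+1) * S (k+1)) := mul_lt_mul_of_pos_left h3 hbpos
          _ = (b * S (k+1)) * S (k+1) := by ring
      exact lt_of_mul_lt_mul_right h6 hp2.le
  set p : ℕ → ℝ := fun x => (l-1) ^ (-(x:ℝ)/2) with hpdef
  have hppos : ∀ x : ℕ, 0 < p x := fun x => Real.rpow_pos_of_pos hl1 _
  have hp0 : p 0 = 1 := by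
    simp only [hpdef, Nat.cast_zero, neg_zero, zero_div, Real.rpow_zero]
  have hbr : (l-1) ^ ((1:ℝ)/2) = b := by
    rw [hbdef, Real.sqrt_eq_rpow]
  have hpstep : ∀ x : ℕ, p (x+1) * b = p x := by
    intro x
    simp only [hpdef]
    rw [← hbr, ← Real.rpow_add hl1]
    congr 1
    push_cast; ring
  have hfval : ∀ x : ℕ, x ≤ r → f₁ x = p x * S (r+1-x) := by
    intro x hx
    have ecast : ((r+1-x:ℕ):ℝ) = (r:ℝ)+1-(x:ℝ) := by
      rw [Nat.cast_sub (by omega : x ≤ r+1)]; push_cast; ring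
    rw [hf₁ x, if_pos hx]
    simp only [hpdef, hSdef]
    rw [ecast]
  have hfout : ∀ x : ℕ, x ∉ Ω → f₁ x = 0 := by
    intro x hx
    rw [hf₁ x, if_neg]
    simp only [hΩdef, Finset.mem_range] at hx
    omega
  have hfpos : ∀ x : ℕ, x ≤ r → 0 < f₁ x := by
    intro x hx
    rw [hfval x hx]
    exact mul_pos (hppos x) (hSpos _ (by omega) (by omega))
  have hfmono : ∀ x : ℕ, x < r → f₁ (x+1) < f₁ x := by
    intro x hx
    have hk := hmono x (r-x) (by omega) (by omega)
    have e1 : r+1-(x+1) = r-x := by omega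
    have e2 : r+1-x = (r-x)+1 := by omega
    rw [hfval (x+1) (by omega), hfval x (by omega), e1, e2]
    calc p (x+1) * S (r-x) < p (x+1) * (b * S ((r-x)+1)) :=
          mul_lt_mul_of_pos_left hk (hppos _)
      _ = (p (x+1) * b) * S ((r-x)+1) := by ring
      _ = p x * S ((r-x)+1) := by rw [hpstep x]
  have hdegpos : ∀ x : ℕ, 0 < deg (rlW l) x := by
    intro x
    cases x with
    | zero => rw [deg_rlW_zero]; norm_num
    | succ n => rw [deg_rlW_succ]; positivity
  have hEig : ∀ x ∈ Ω, dLap (rlW l) Ω f₁ x = lam * f₁ x := by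
    intro x hx
    rw [hΩdef, Finset.mem_range] at hx
    have hxr : x ≤ r := by omega
    simp only [dLap]
    cases x with
    | zero =>
      rw [deg_rlW_zero, hΩdef, sum_rlW_zero l f₁ (r+1) (by omega)]
      have hf0 : f₁ 0 = S (r+1) := by
        have e : r+1-0 = r+1 := by omega
        rw [hfval 0 (by omega), e, hp0, one_mul]
      have hf1' : f₁ 1 = p 1 * S r := by
        have e : r+1-1 = r := by omega
        rw [hfval 1 hr, e]
      have hp1' : p 1 = 1/b := by
        rw [eq_div_iff (ne_of_gt hbpos)]
        rw [hpstep 0, hp0]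
      have heqS : S (r+1) * Real.cos θ * (2*(l-1)) = l * S r := by
        have e : ((r+1:ℕ):ℝ)*θ = ((r:ℝ)+1)*θ := by push_cast; ring
        simp only [hSdef]
        rw [e]
        exact heq
      have key0 : p 1 * S r = (2*b/l*Real.cos θ) * S (r+1) := by
        rw [hp1']
        field_simp
        linear_combination (-(2*Real.cos θ * S (r+1))) * hb2 - heqS
      rw [hf0, hf1', key0, hlamdef]
      ring
    | succ v =>
      have hv1 : 1 ≤ v + 1 := by omega
      have hvr : v + 1 ≤ r := hxr
      set k : ℕ := r - (v+1) with hkdef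
      have hsum : ∑ y ∈ Ω, rlW l (v+1) y * f₁ y
          = (l-1)^v * f₁ v + (l-1)^(v+1) * f₁ (v+2) := by
        rcases eq_or_lt_of_le hvr with hvr' | hvr'
        · rw [hΩdef, ← hvr']
          rw [sum_rlW_top l f₁ (v+1) hv1]
          have hz : f₁ (v+2) = 0 := by rw [hf₁ (v+2), if_neg (by omega)]
          rw [hz]
          simp
        · rw [hΩdef, sum_rlW_mid l f₁ (r+1) (v+1) hv1 (by omega)]
          simp
      rw [hsum, deg_rlW_succ]
      have hfv : f₁ (v+1) = p (v+1) * S (k+1) := by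
        have e : r+1-(v+1) = k+1 := by omega
        rw [hfval (v+1) hvr, e]
      have hfm : f₁ v = p v * S (k+2) := by
        have e : r+1-v = k+2 := by omega
        rw [hfval v (by omega), e]
      have hfp : f₁ (v+2) = p (v+2) * S k := by
        rcases eq_or_lt_of_le hvr with hvr' | hvr'
        · have hk0 : k = 0 := by omega
          rw [hf₁ (v+2), if_neg (by omega), hk0, hS0, mul_zero]
        · have e : r+1-(v+2) = k := by omega
          rw [hfval (v+2) (by omega), e]
      have hq1 : p (v+1) = p (v+2) * b := (hpstep (v+1)).symm
      have hq2 : p v = p (v+2) * b * b := by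
        rw [← hpstep v, ← hpstep (v+1)]
      have hd0 : (0:ℝ) < (l-1)^v := by positivity
      have keyv : (l-1)^v * (p (v+2) * b * b * S (k+2)) + (l-1)^(v+1) * (p (v+2) * S k)
          = (2*b/l*Real.cos θ) * ((l-1)^v*l) * (p (v+2) * b * S (k+1)) := by
        have e : (2*b/l*Real.cos θ) * ((l-1)^v*l) * (p (v+2) * b * S (k+1))
            = 2*Real.cos θ*(l-1)^v * (p (v+2) * b * b * S (k+1)) := by
          field_simp
        rw [e]
        linear_combination ((l-1)^(v+1) * p (v+2)) * hS3 k
          + ((l-1)^v * p (v+2) * (S (k+2) - 2*Real.cos θ*S (k+1))) * hb2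
      rw [hfv, hfm, hfp, hq1, hq2, keyv, hlamdef]
      have hdl : ((l-1)^v*l) ≠ 0 := by positivity
      field_simp
  have hEigfun : IsDirEigfun (rlW l) Ω lam f₁ :=
    ⟨⟨0, by simp [hΩdef], ne_of_gt (hfpos 0 (by omega))⟩, hfout, hEig⟩
  have hmem : IsDirEig (rlW l) Ω lam := ⟨f₁, hEigfun⟩
  have hsumform : ∀ (g : ℕ → ℝ) (lg : ℝ), (∀ x ∈ Ω, dLap (rlW l) Ω g x = lg * g x) →
      ∀ x ∈ Ω, ∑ y ∈ Ω, rlW l x y * g y = (1 - lg) * deg (rlW l) x * g x := by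
    intro g lg hg x hx
    have h := hg x hx
    simp only [dLap] at h
    have hd := hdegpos x
    have h2 : (1/deg (rlW l) x) * ∑ y ∈ Ω, rlW l x y * g y = (1 - lg) * g x := by
      linarith
    calc ∑ y ∈ Ω, rlW l x y * g y
        = deg (rlW l) x * ((1/deg (rlW l) x) * ∑ y ∈ Ω, rlW l x y * g y) := by
          field_simp
      _ = deg (rlW l) x * ((1 - lg) * g x) := by rw [h2]
      _ = (1 - lg) * deg (rlW l) x * g x := by ring
  have hΩle : ∀ x ∈ Ω, x ≤ r := by
    intro x hx
    rw [hΩdef, Finset.mem_range] at hx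
    omega
  have hlb : ∀ lam' ∈ {l' : ℝ | IsDirEig (rlW l) Ω l'}, lam ≤ lam' := by
    intro lam' hlam'
    obtain ⟨g, ⟨x₀, hx₀, hg₀⟩, hgout, hgeq⟩ := hlam'
    have hgsum := hsumform g lam' hgeq
    have hfsum := hsumform f₁ lam hEig
    set S0 : ℝ := ∑ x ∈ Ω, deg (rlW l) x * f₁ x * |g x| with hS0def
    have hS0pos : 0 < S0 := by
      apply Finset.sum_pos'
      · intro x hx
        have h1 := hfpos x (hΩle x hx)
        have h2 := hdegpos x
        positivity
      · refine ⟨x₀, hx₀, ?_⟩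
        have h1 := hfpos x₀ (hΩle x₀ hx₀)
        have h2 := hdegpos x₀
        have h3 : 0 < |g x₀| := abs_pos.mpr hg₀
        positivity
    have hw : ∀ i j : ℕ, 0 ≤ rlW l i j := rlW_nonneg (by linarith)
    have step1 : |1 - lam'| * S0 = ∑ x ∈ Ω, f₁ x * |∑ y ∈ Ω, rlW l x y * g y| := by
      rw [hS0def, Finset.mul_sum]
      apply Finset.sum_congr rfl
      intro x hx
      rw [hgsum x hx, abs_mul, abs_mul, abs_of_nonneg (hdegpos x).le]
      ring
    have step2 : ∑ x ∈ Ω, f₁ x * |∑ y ∈ Ω, rlW l x y * g y|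
        ≤ ∑ x ∈ Ω, f₁ x * ∑ y ∈ Ω, rlW l x y * |g y| := by
      apply Finset.sum_le_sum
      intro x hx
      apply mul_le_mul_of_nonneg_left _ (hfpos x (hΩle x hx)).le
      refine le_trans (Finset.abs_sum_le_sum_abs _ _) (le_of_eq ?_)
      apply Finset.sum_congr rfl
      intro y _
      rw [abs_mul, abs_of_nonneg (hw x y)]
    have step3 : ∑ x ∈ Ω, f₁ x * ∑ y ∈ Ω, rlW l x y * |g y|
        = ∑ y ∈ Ω, |g y| * ((1-lam) * deg (rlW l) y * f₁ y) := by
      simp_rw [Finset.mul_sum]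
      rw [Finset.sum_comm]
      apply Finset.sum_congr rfl
      intro y hy
      rw [← hfsum y hy, Finset.mul_sum]
      apply Finset.sum_congr rfl
      intro x hx
      rw [rlW_symm l x y]
      ring
    have step4 : ∑ y ∈ Ω, |g y| * ((1-lam) * deg (rlW l) y * f₁ y) = (1 - lam) * S0 := by
      rw [hS0def, Finset.mul_sum]
      apply Finset.sum_congr rfl
      intro y _
      ring
    have hchain : |1 - lam'| * S0 ≤ (1 - lam) * S0 := by
      rw [step1, ← step4, ← step3]
      exact step2
    have h5 : |1 - lam'| ≤ 1 - lam := le_of_mul_le_mul_right hchain hS0pos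
    have h6 : 1 - lam' ≤ |1 - lam'| := le_abs_self _
    linarith
  have hlam1 : lam1 (rlW l) Ω = lam := by
    unfold lam1
    exact IsLeast.csInf_eq ⟨hmem, hlb⟩
  exact ⟨hlam1, hEigfun, hfpos, hfmono⟩
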